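/- An allocation z is fractionally Pareto-optimal if and only if there exists a vector of strictly positive weights (λ_i)_{i∈[n]} such that for all agents i and objects o, z_{i,o} > 0 implies λ_i v_{i,o} ≥ λ_j v_{j,o} for every agent j. -/

import Mathlib

open Finset

/-- An allocation: nonnegative matrix with column sums 1. -/
def IsAllocation {n m : ℕ} (z : Fin n → Fin m → ℝ) : Prop :=
  (∀ i o, 0 ≤ z i o) ∧ ∀ o, ∑ i, z i o = 1

/-- Additive utility of agent `i` at allocation `z`. -/
def utility {n m : ℕ} (v z : Fin n → Fin m → ℝ) (i : Fin n) : ℝ :=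
  ∑ o, v i o * z i o

/-- Fractional Pareto optimality: no feasible allocation weakly improves everyone
and strictly improves someone. -/
def IsFPO {n m : ℕ} (v z : Fin n → Fin m → ℝ) : Prop :=
  ¬ ∃ y, IsAllocation y ∧ (∀ i, utility v z i ≤ utility v y i) ∧
    ∃ i, utility v z i < utility v y i

/-- Number of sharings of allocation `z`. -/
noncomputable def sharings {n m : ℕ} (z : Fin n → Fin m → ℝ) : ℕ :=
  ∑ o : Fin m, ((Finset.univ.filter (fun i : Fin n => 0 < z i o)).card - 1)



section Cone
variable {ι : Type*} [Fintype ι] [DecidableEq ι] {E : Type*} [NormedAddCommGroup E]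
  [NormedSpace ℝ E] [FiniteDimensional ℝ E]

/-- Nonnegative combinations of `g` supported on `t`. -/
def coneOn (g : ι → E) (t : Finset ι) : Set E :=
  {x | ∃ c : ι → ℝ, (∀ i, 0 ≤ c i) ∧ (∀ i ∉ t, c i = 0) ∧ x = ∑ i, c i • g i}

lemma caratheodory (g : ι → E) : ∀ t : Finset ι, ∀ x ∈ coneOn g t,
    ∃ s ⊆ t, LinearIndependent ℝ (fun i : s => g i) ∧ x ∈ coneOn g s := by
  intro t
  induction t using Finset.strongInductionOn with
  | _ t ih =>
    rintro x ⟨c, hc0, hcz, rfl⟩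
    by_cases hli : LinearIndependent ℝ (fun i : t => g i)
    · exact ⟨t, subset_rfl, hli, c, hc0, hcz, rfl⟩
    have main : ∀ D : ι → ℝ, (∑ i, D i • g i = 0) → (∀ i ∉ t, D i = 0) →
        (∃ i ∈ t, 0 < D i) →
        ∃ s ⊆ t, LinearIndependent ℝ (fun i : s => g i) ∧
          (∑ i, c i • g i) ∈ coneOn g s := by
      rintro D hDsum hDz ⟨ip, hipt, hipD⟩
      set P : Finset ι := t.filter (fun i => 0 < D i) with hP
      have hPne : P.Nonempty := ⟨ip, Finset.mem_filter.mpr ⟨hipt, hipD⟩⟩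
      set r : ℝ := P.inf' hPne (fun i => c i / D i) with hr
      obtain ⟨i0, hi0P, hi0eq⟩ := Finset.exists_mem_eq_inf' hPne (fun i => c i / D i)
      have hi0t : i0 ∈ t := (Finset.mem_filter.mp hi0P).1
      have hi0D : 0 < D i0 := (Finset.mem_filter.mp hi0P).2
      have hr0 : 0 ≤ r := by
        apply Finset.le_inf'
        intro i hi
        exact div_nonneg (hc0 i) (le_of_lt (Finset.mem_filter.mp hi).2)
      set c' : ι → ℝ := fun i => c i - r * D i with hc'
      have hc'0 : ∀ i, 0 ≤ c' i := by
        intro i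
        by_cases hiP : i ∈ P
        · have h1 : r ≤ c i / D i := Finset.inf'_le _ hiP
          have h2 : 0 < D i := (Finset.mem_filter.mp hiP).2
          have := (le_div_iff₀ h2).mp h1
          simpa [hc'] using this
        · have hDle : D i ≤ 0 := by
            by_cases hit : i ∈ t
            · by_contra hpos
              exact hiP (Finset.mem_filter.mpr ⟨hit, lt_of_not_ge hpos⟩)
            · simp [hDz i hit]
          have h3 : r * D i ≤ c i :=
            (mul_nonpos_of_nonneg_of_nonpos hr0 hDle).trans (hc0 i)
          simpa [hc'] using sub_nonneg.mpr h3
      have hc'z : ∀ i ∉ t.erase i0, c' i = 0 := by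
        intro i hi
        by_cases hit : i ∈ t
        · have hii : i = i0 := by
            by_contra hne
            exact hi (Finset.mem_erase.mpr ⟨hne, hit⟩)
          subst hii
          have : r = c i / D i := hi0eq
          simp [hc', this, div_mul_cancel₀ _ (ne_of_gt hi0D)]
        · simp [hc', hcz i hit, hDz i hit]
      have hsum : ∑ i, c' i • g i = ∑ i, c i • g i := by
        simp only [hc', sub_smul, Finset.sum_sub_distrib, mul_smul]
        rw [← Finset.smul_sum, hDsum, smul_zero, sub_zero]
      have hmem : (∑ i, c i • g i) ∈ coneOn g (t.erase i0) :=
        ⟨c', hc'0, hc'z, hsum.symm⟩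
      obtain ⟨s, hs1, hs2, hs3⟩ := ih (t.erase i0) (Finset.erase_ssubset hi0t) _ hmem
      exact ⟨s, hs1.trans (Finset.erase_subset _ _), hs2, hs3⟩
    obtain ⟨d, hdsum, i1, hd1⟩ := Fintype.not_linearIndependent_iff.mp hli
    set D : ι → ℝ := fun i => if h : i ∈ t then d ⟨i, h⟩ else 0 with hD
    have hDz : ∀ i ∉ t, D i = 0 := fun i hi => by simp [hD, hi]
    have hDsum : ∑ i, D i • g i = 0 := by
      rw [← Finset.sum_subset (Finset.subset_univ t)
        (fun i _ hi => by simp [hD, hi])]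
      rw [← Finset.sum_attach t (fun i => D i • g i)]
      simpa [hD] using hdsum
    by_cases hpos : ∃ i ∈ t, 0 < D i
    · exact main D hDsum hDz hpos
    · push_neg at hpos
      have : ∃ i ∈ t, 0 < -D i := by
        refine ⟨i1, i1.2, ?_⟩
        have : D i1 ≠ 0 := by simpa [hD, i1.2] using hd1
        have hle := hpos i1 i1.2
        cases lt_or_eq_of_le hle with
        | inl h => simpa using h
        | inr h => exact absurd h this
      refine main (-D) ?_ (fun i hi => by simp [hDz i hi]) this
      simpa [neg_smul] using congrArg Neg.neg hDsum

lemma coneOn_isClosed_of_li (g : ι → E) (t : Finset ι)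
    (h : LinearIndependent ℝ (fun i : t => g i)) : IsClosed (coneOn g t) := by
  classical
  let f : ({x // x ∈ t} → ℝ) →ₗ[ℝ] E :=
    { toFun := fun c => ∑ i : {x // x ∈ t}, c i • g i
      map_add' := fun a b => by simp [add_smul, Finset.sum_add_distrib]
      map_smul' := fun a b => by simp [smul_smul, Finset.smul_sum] }
  have hker : LinearMap.ker f = ⊥ := by
    rw [LinearMap.ker_eq_bot']
    intro c hc
    funext i
    exact Fintype.linearIndependent_iff.mp h c hc i
  have hemb := LinearMap.isClosedEmbedding_of_injective hker
  have horth : IsClosed {c : {x // x ∈ t} → ℝ | ∀ i, 0 ≤ c i} := by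
    have : {c : {x // x ∈ t} → ℝ | ∀ i, 0 ≤ c i} = ⋂ i, {c | 0 ≤ c i} := by
      ext c; simp [Set.mem_iInter]
    rw [this]
    exact isClosed_iInter fun i => isClosed_le continuous_const (continuous_apply i)
  have himg : coneOn g t = f '' {c | ∀ i, 0 ≤ c i} := by
    ext x
    constructor
    · rintro ⟨c, hc0, hcz, rfl⟩
      refine ⟨fun i => c i, fun i => hc0 i, ?_⟩
      show ∑ i : {x // x ∈ t}, c i • g i = _
      rw [Finset.sum_coe_sort t (fun i => c i • g i)]
      exact Finset.sum_subset (Finset.subset_univ t)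
        (fun i _ hi => by simp [hcz i hi])
    · rintro ⟨c, hc0, rfl⟩
      refine ⟨fun i => if h : i ∈ t then c ⟨i, h⟩ else 0,
        fun i => by by_cases h : i ∈ t <;> simp [h, hc0 _], fun i hi => by simp [hi], ?_⟩
      show (∑ i : {x // x ∈ t}, c i • g i) = _
      rw [← Finset.sum_subset (Finset.subset_univ t)
        (fun i _ hi => by simp [hi])]
      rw [← Finset.sum_coe_sort t fun i => (if h : i ∈ t then c ⟨i, h⟩ else 0) • g i]
      exact Finset.sum_congr rfl fun i _ => by simp [i.2]
  rw [himg]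
  exact hemb.isClosedMap _ horth

lemma coneHull_isClosed (g : ι → E) :
    IsClosed {x : E | ∃ c : ι → ℝ, (∀ i, 0 ≤ c i) ∧ x = ∑ i, c i • g i} := by
  have heq : {x : E | ∃ c : ι → ℝ, (∀ i, 0 ≤ c i) ∧ x = ∑ i, c i • g i} =
      ⋃ s ∈ {s : Finset ι | LinearIndependent ℝ (fun i : s => g i)}, coneOn g s := by
    ext x
    constructor
    · rintro ⟨c, hc0, rfl⟩
      obtain ⟨s, _, hli, hmem⟩ := caratheodory g Finset.univ _
        ⟨c, hc0, fun i hi => absurd (Finset.mem_univ i) hi, rfl⟩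
      exact Set.mem_biUnion hli hmem
    · intro hx
      obtain ⟨s, _, c, hc0, _, rfl⟩ := Set.mem_iUnion₂.mp hx
      exact ⟨c, hc0, rfl⟩
  rw [heq]
  exact Set.Finite.isClosed_biUnion (Set.toFinite _)
    (fun s hs => coneOn_isClosed_of_li g s hs)

end Cone

open scoped InnerProductSpace

theorem farkas {N : ℕ} {R : Type*} [Fintype R] [DecidableEq R] (g : R → Fin N → ℝ) (h : R → ℝ)
    (infeas : ¬ ∃ lam : Fin N → ℝ, ∀ r, ∑ k, g r k * lam k ≤ h r) :
    ∃ μ : R → ℝ, (∀ r, 0 ≤ μ r) ∧ (∀ k, ∑ r, μ r * g r k = 0) ∧ ∑ r, μ r * h r < 0 := by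
  classical
  let A : Fin N → EuclideanSpace ℝ R := fun k => WithLp.toLp 2 (fun r => g r k : R → ℝ)
  let gen : (Bool × Fin N) ⊕ R → EuclideanSpace ℝ R := Sum.elim
    (fun p => if p.1 then A p.2 else -A p.2) (fun r => EuclideanSpace.single r 1)
  set b : EuclideanSpace ℝ R := WithLp.toLp 2 (fun r => h r : R → ℝ) with hb
  have hinner : ∀ x y : EuclideanSpace ℝ R, ⟪x, y⟫_ℝ = ∑ r, x r * y r := by
    intro x y
    simp [PiLp.inner_apply, RCLike.inner_apply, starRingEnd_apply]
    exact Finset.sum_congr rfl fun r _ => mul_comm _ _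
  have happly : ∀ (c : (Bool × Fin N) ⊕ R → ℝ) (r : R),
      (∑ i, c i • gen i) r = ∑ i, c i * gen i r := by
    intro c r
    rw [WithLp.ofLp_sum, Finset.sum_apply]
    rfl
  set S : Set (EuclideanSpace ℝ R) :=
    {x | ∃ c : (Bool × Fin N) ⊕ R → ℝ, (∀ i, 0 ≤ c i) ∧ x = ∑ i, c i • gen i} with hS
  have hSclosed : IsClosed S := coneHull_isClosed gen
  have hS0 : (0 : EuclideanSpace ℝ R) ∈ S := ⟨0, by simp, by simp⟩
  let K : ConvexCone ℝ (EuclideanSpace ℝ R) :=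
    { carrier := S
      smul_mem' := by
        rintro a ha x ⟨c, hc0, rfl⟩
        exact ⟨fun i => a * c i, fun i => mul_nonneg ha.le (hc0 i), by
          rw [Finset.smul_sum]; simp [smul_smul]⟩
      add_mem' := by
        rintro x ⟨c, hc0, rfl⟩ y ⟨c', hc'0, rfl⟩
        exact ⟨fun i => c i + c' i, fun i => add_nonneg (hc0 i) (hc'0 i), by
          simp [add_smul, Finset.sum_add_distrib]⟩ }
  have hgen_mem : ∀ i, gen i ∈ S := by
    intro i
    refine ⟨fun j => if j = i then 1 else 0, fun j => by positivity, ?_⟩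
    symm
    rw [Finset.sum_eq_single_of_mem i (Finset.mem_univ i)]
    · simp
    · intro j _ hj; simp [hj]
  have hbnot : b ∉ K := by
    rintro ⟨c, hc0, hbeq⟩
    apply infeas
    refine ⟨fun k => c (Sum.inl (true, k)) - c (Sum.inl (false, k)), fun r => ?_⟩
    have key : h r = (∑ k, g r k * (c (Sum.inl (true, k)) - c (Sum.inl (false, k))))
        + c (Sum.inr r) := by
      have h1 : h r = ∑ i, c i * gen i r := by
        have : b r = (∑ i, c i • gen i) r := by rw [hbeq]
        rwa [happly] at this
      have e1 : ∀ r', gen (Sum.inr r') r = if r = r' then (1:ℝ) else 0 := fun r' => by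
        simp [gen, EuclideanSpace.single_apply]
      have e2 : ∀ k, gen (Sum.inl (true, k)) r = g r k := fun k => rfl
      have e3 : ∀ k, gen (Sum.inl (false, k)) r = -(g r k) := fun k => rfl
      rw [h1, Fintype.sum_sum_type, Fintype.sum_prod_type, Fintype.sum_bool]
      simp only [e1, e2, e3, mul_ite, mul_one, mul_zero, Finset.sum_ite_eq,
        Finset.mem_univ, if_true]
      have e4 : ∑ k, g r k * (c (Sum.inl (true, k)) - c (Sum.inl (false, k)))
          = ∑ k, c (Sum.inl (true, k)) * g r k + ∑ k, c (Sum.inl (false, k)) * -(g r k) := by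
        rw [← Finset.sum_add_distrib]
        exact Finset.sum_congr rfl fun k _ => by ring
      rw [e4]
    have := hc0 (Sum.inr r)
    linarith
  let C : ProperCone ℝ (EuclideanSpace ℝ R) :=
    { carrier := S
      add_mem' := fun hx hy => K.add_mem' hx hy
      zero_mem' := hS0
      smul_mem' := fun a x hx => by
          obtain ⟨c, hc0, rfl⟩ := hx
          exact ⟨fun i => (a : ℝ) * c i, fun i => mul_nonneg a.2 (hc0 i), by
            rw [Finset.smul_sum]
            exact Finset.sum_congr rfl fun i _ => by rw [mul_smul]; rfl⟩
      isClosed' := hSclosed }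
  obtain ⟨y, hy1, hy2⟩ :=
    C.hyperplane_separation' (x₀ := b) hbnot
  refine ⟨fun r => y r, ?_, ?_, ?_⟩
  · intro r
    have := hy1 _ (hgen_mem (Sum.inr r))
    rw [hinner] at this
    simpa [gen, EuclideanSpace.single_apply] using this
  · intro k
    have h1 := hy1 _ (hgen_mem (Sum.inl (true, k)))
    have h2 := hy1 _ (hgen_mem (Sum.inl (false, k)))
    rw [hinner] at h1 h2
    simp only [gen, Sum.elim_inl, if_true, if_false] at h1 h2
    have h1' : 0 ≤ ∑ r, g r k * y r := by simpa [A] using h1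
    have h2' : ∑ r, g r k * y r ≤ 0 := by
      have : 0 ≤ ∑ r, -(g r k * y r) := by
        simpa [A] using h2
      rw [Finset.sum_neg_distrib] at this
      linarith
    have : ∑ r, g r k * y r = 0 := le_antisymm h2' h1'
    rw [← this]
    exact Finset.sum_congr rfl fun r _ => mul_comm _ _
  · have := hy2
    rw [hinner] at this
    rw [Finset.sum_congr rfl fun r _ => mul_comm (y r) (h r)]
    exact this

/-- fPO is equivalent to the existence of a positive welfare-weight certificate. -/
theorem stmt1 {n m : ℕ} (v z : Fin n → Fin m → ℝ) (hz : IsAllocation z) :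
    IsFPO v z ↔
      ∃ lam : Fin n → ℝ, (∀ i, 0 < lam i) ∧
        ∀ i o, 0 < z i o → ∀ j, lam j * v j o ≤ lam i * v i o := by
  classical
  constructor
  · -- hard direction: fPO → certificate
    intro hfpo
    by_cases hn : n = 0
    · subst hn
      exact ⟨fun _ => 1, fun i => i.elim0, fun i => i.elim0⟩
    by_cases hm : m = 0
    · subst hm
      exact ⟨fun _ => 1, fun _ => one_pos, fun i o => o.elim0⟩
    haveI : Nonempty (Fin n) := ⟨⟨0, Nat.pos_of_ne_zero hn⟩⟩
    haveI : Nonempty (Fin m) := ⟨⟨0, Nat.pos_of_ne_zero hm⟩⟩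
    by_contra hcert
    set g : (Fin n ⊕ (Fin m × Fin n × Fin n)) → Fin n → ℝ := fun r k =>
      match r with
      | Sum.inl i => if k = i then (-1:ℝ) else 0
      | Sum.inr (o, i, j) => if 0 < z i o then
          (if k = j then v j o else 0) - (if k = i then v i o else 0) else 0
      with hg
    set h : (Fin n ⊕ (Fin m × Fin n × Fin n)) → ℝ := fun r =>
      match r with | Sum.inl _ => (-1:ℝ) | Sum.inr _ => 0 with hh
    have infeas : ¬ ∃ lam : Fin n → ℝ, ∀ r, ∑ k, g r k * lam k ≤ h r := by
      rintro ⟨lam, hlam⟩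
      apply hcert
      refine ⟨lam, fun i => ?_, fun i o hio j => ?_⟩
      · have h1 := hlam (Sum.inl i)
        have e : ∑ k, g (Sum.inl i) k * lam k = -lam i := by
          simp [hg, ite_mul, Finset.sum_ite_eq']
        rw [e] at h1
        have : h (Sum.inl i) = -1 := rfl
        rw [this] at h1
        linarith
      · have h1 := hlam (Sum.inr (o, i, j))
        have e : ∑ k, g (Sum.inr (o, i, j)) k * lam k
            = v j o * lam j - v i o * lam i := by
          simp [hg, hio, sub_mul, ite_mul, Finset.sum_sub_distrib, Finset.sum_ite_eq']
        rw [e] at h1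
        have : h (Sum.inr (o, i, j)) = 0 := rfl
        rw [this] at h1
        nlinarith [h1]
    obtain ⟨mu, hmu0, hmug, hmuh⟩ := farkas g h infeas
    set al : Fin n → ℝ := fun i => mu (Sum.inl i) with hal
    set be : Fin m → Fin n → Fin n → ℝ := fun o i j =>
      if 0 < z i o then mu (Sum.inr (o, i, j)) else 0 with hbe
    have hbe0 : ∀ o i j, 0 ≤ be o i j := by
      intro o i j
      by_cases hzc : 0 < z i o <;> simp [hbe, hzc, hmu0 (Sum.inr (o, i, j))]
    set d : Fin n → Fin m → ℝ := fun k o => (∑ i, be o i k) - (∑ j, be o k j) with hd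
    -- stationarity
    have stat : ∀ k, ∑ o, v k o * d k o = al k := by
      intro k
      have h0 := hmug k
      rw [Fintype.sum_sum_type] at h0
      have p1 : ∑ i, mu (Sum.inl i) * g (Sum.inl i) k = -al k := by
        simp [hg, hal, mul_ite, Finset.sum_ite_eq]
      have p2 : ∑ p : Fin m × Fin n × Fin n, mu (Sum.inr p) * g (Sum.inr p) k
          = ∑ o, v k o * d k o := by
        rw [Fintype.sum_prod_type]
        apply Finset.sum_congr rfl
        intro o _
        rw [Fintype.sum_prod_type]
        have term_eq : ∀ i j, mu (Sum.inr (o, i, j)) * g (Sum.inr (o, i, j)) k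
            = be o i j * (if k = j then v j o else 0)
              - be o i j * (if k = i then v i o else 0) := by
          intro i j
          by_cases hzc : 0 < z i o
          · simp [hg, hbe, hzc, mul_sub]
          · simp [hg, hbe, hzc]
        calc ∑ i, ∑ j, mu (Sum.inr (o, i, j)) * g (Sum.inr (o, i, j)) k
            = ∑ i, ∑ j, (be o i j * (if k = j then v j o else 0)
              - be o i j * (if k = i then v i o else 0)) := by
              exact Finset.sum_congr rfl fun i _ =>
                Finset.sum_congr rfl fun j _ => term_eq i j
          _ = (∑ i, ∑ j, be o i j * (if k = j then v j o else 0))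
              - ∑ i, ∑ j, be o i j * (if k = i then v i o else 0) := by
              simp [Finset.sum_sub_distrib]
          _ = (∑ i, be o i k * v k o) - ∑ j, be o k j * v k o := by
              congr 1
              · apply Finset.sum_congr rfl
                intro i _
                simp [mul_ite, Finset.sum_ite_eq]
              · rw [Finset.sum_comm]
                apply Finset.sum_congr rfl
                intro j _
                simp [mul_ite, Finset.sum_ite_eq]
          _ = v k o * d k o := by
              rw [hd]
              simp [← Finset.sum_mul]
              ring
      rw [p1, p2] at h0
      linarith
    -- column sums of d vanish
    have hcol : ∀ o, ∑ k, d k o = 0 := by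
      intro o
      rw [hd]
      simp only [Finset.sum_sub_distrib]
      rw [Finset.sum_comm]
      ring
    -- nonnegativity where z vanishes
    have hdz : ∀ k o, z k o = 0 → 0 ≤ d k o := by
      intro k o hzk
      have hnot : ¬ 0 < z k o := by rw [hzk]; exact lt_irrefl 0
      have : (∑ j, be o k j) = 0 := Finset.sum_eq_zero fun j _ => by simp [hbe, hnot]
      rw [hd]
      simp only
      rw [this, sub_zero]
      exact Finset.sum_nonneg fun i _ => hbe0 o i k
    -- alpha properties
    have hal0 : ∀ i, 0 ≤ al i := fun i => hmu0 (Sum.inl i)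
    have halsum : 0 < ∑ i, al i := by
      have e : ∑ r, mu r * h r = -∑ i, al i := by
        rw [Fintype.sum_sum_type]
        have e1 : ∑ i, mu (Sum.inl i) * h (Sum.inl i) = -∑ i, al i := by
          simp [hh, hal, Finset.sum_neg_distrib]
        have e2 : ∑ p : Fin m × Fin n × Fin n, mu (Sum.inr p) * h (Sum.inr p) = 0 := by
          simp [hh]
        rw [e1, e2, add_zero]
      rw [e] at hmuh
      linarith
    obtain ⟨istar, histar⟩ : ∃ i, 0 < al i := by
      by_contra hno
      push_neg at hno
      have : ∑ i, al i ≤ 0 := Finset.sum_nonpos fun i _ => hno i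
      linarith
    -- step size
    set phi : Fin n × Fin m → ℝ := fun p =>
      if d p.1 p.2 < 0 then z p.1 p.2 / (-(d p.1 p.2)) else 1 with hphi
    have hzd : ∀ k o, d k o < 0 → 0 < z k o := by
      intro k o hneg
      rcases (hz.1 k o).eq_or_lt with hh' | hh'
      · exact absurd (hdz k o hh'.symm) (not_le.mpr hneg)
      · exact hh'
    set t : ℝ := Finset.univ.inf' Finset.univ_nonempty phi with htdef
    have ht : 0 < t := by
      rw [htdef, Finset.lt_inf'_iff]
      intro p _
      rw [hphi]
      by_cases hneg : d p.1 p.2 < 0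
      · simp only [hneg, if_true]
        exact div_pos (hzd p.1 p.2 hneg) (by linarith)
      · simp [hneg]
    have hynn : ∀ k o, 0 ≤ z k o + t * d k o := by
      intro k o
      by_cases hneg : d k o < 0
      · have h1 : t ≤ phi (k, o) := Finset.inf'_le _ (Finset.mem_univ (k, o))
        rw [hphi] at h1
        simp only [hneg, if_true] at h1
        have h2 : t * (-(d k o)) ≤ z k o := (le_div_iff₀ (by linarith)).mp h1
        nlinarith
      · push_neg at hneg
        have := mul_nonneg ht.le hneg
        linarith [hz.1 k o]
    set y : Fin n → Fin m → ℝ := fun k o => z k o + t * d k o with hy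
    have hyalloc : IsAllocation y := by
      constructor
      · intro i o; exact hynn i o
      · intro o
        rw [hy]
        simp only
        rw [Finset.sum_add_distrib, hz.2 o, ← Finset.mul_sum, hcol o, mul_zero, add_zero]
    have huy : ∀ i, utility v y i = utility v z i + t * al i := by
      intro i
      rw [utility, utility, hy, ← stat i]
      simp only
      rw [Finset.mul_sum, ← Finset.sum_add_distrib]
      apply Finset.sum_congr rfl
      intro o _
      ring
    exact absurd ⟨y, hyalloc, fun i => by rw [huy i]; nlinarith [hal0 i, ht],
      istar, by rw [huy istar]; nlinarith⟩ hfpo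
  · -- easy direction: certificate → fPO
    rintro ⟨lam, hpos, hcert⟩ ⟨y, hy, hge, i0, hgt⟩
    have hwex : ∀ o, ∃ i, 0 < z i o := by
      intro o
      by_contra hno
      push_neg at hno
      have : ∑ i, z i o = 0 := Finset.sum_eq_zero fun i _ =>
        le_antisymm (hno i) (hz.1 i o)
      rw [hz.2 o] at this
      norm_num at this
    choose w hw using hwex
    have hMy : ∀ o, ∑ i, lam i * (v i o * y i o) ≤ lam (w o) * v (w o) o := by
      intro o
      calc ∑ i, lam i * (v i o * y i o)
          ≤ ∑ i, lam (w o) * v (w o) o * y i o := by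
            apply Finset.sum_le_sum
            intro i _
            have h1 : lam i * v i o ≤ lam (w o) * v (w o) o := hcert (w o) o (hw o) i
            have h2 : 0 ≤ y i o := hy.1 i o
            calc lam i * (v i o * y i o) = (lam i * v i o) * y i o := by ring
              _ ≤ lam (w o) * v (w o) o * y i o := mul_le_mul_of_nonneg_right h1 h2
        _ = lam (w o) * v (w o) o := by
            rw [← Finset.mul_sum, hy.2 o, mul_one]
    have hMz : ∀ o, ∑ i, lam i * (v i o * z i o) = lam (w o) * v (w o) o := by
      intro o
      have : ∀ i ∈ Finset.univ, lam i * (v i o * z i o)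
          = lam (w o) * v (w o) o * z i o := by
        intro i _
        rcases (hz.1 i o).eq_or_lt with h | h
        · rw [← h]; ring
        · have h1 : lam i * v i o = lam (w o) * v (w o) o :=
            le_antisymm (hcert (w o) o (hw o) i) (hcert i o h (w o))
          calc lam i * (v i o * z i o) = (lam i * v i o) * z i o := by ring
            _ = lam (w o) * v (w o) o * z i o := by rw [h1]
      rw [Finset.sum_congr rfl this, ← Finset.mul_sum, hz.2 o, mul_one]
    have hglobal : ∑ i, lam i * utility v y i ≤ ∑ i, lam i * utility v z i := by
      have e1 : ∑ i, lam i * utility v y i = ∑ o, ∑ i, lam i * (v i o * y i o) := by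
        rw [Finset.sum_comm]
        exact Finset.sum_congr rfl fun i _ => by rw [utility, Finset.mul_sum]
      have e2 : ∑ i, lam i * utility v z i = ∑ o, ∑ i, lam i * (v i o * z i o) := by
        rw [Finset.sum_comm]
        exact Finset.sum_congr rfl fun i _ => by rw [utility, Finset.mul_sum]
      rw [e1, e2]
      apply Finset.sum_le_sum
      intro o _
      rw [hMz o]
      exact hMy o
    have hstrict : ∑ i, lam i * utility v z i < ∑ i, lam i * utility v y i := by
      apply Finset.sum_lt_sum
      · intro i _
        exact mul_le_mul_of_nonneg_left (hge i) (hpos i).le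
      · exact ⟨i0, Finset.mem_univ i0, mul_lt_mul_of_pos_left hgt (hpos i0)⟩
    linarith
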